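/- Assume complete and bounded recourse, polyhedral support, and polyhedral penalty. Then for any set X ⊆ ℝ^{n_x}, the set Y = {(x, υ, k) ∈ X × ℝ × ℝ₊ : g(x,z) − k·p(z) ≤ υ for all z ∈ Z} equals the set of all (x, υ, k) ∈ X × ℝ × ℝ₊ for which there exist functions β : ℝ^{n_f} → ℝ^{n_h}, μ : ℝ^{n_f} → ℝ^{n_μ} and η : ℝ^{n_f} → ℝ such that for every ρ ∈ P: ρᵀf(x) + β(ρ)ᵀh + η(ρ) ≤ υ; M(F(x)ᵀρ − Hᵀβ(ρ)) + Nμ(ρ) + s·η(ρ) ≤ t·k; β(ρ) ≥ 0; and η(ρ) ≥ 0. -/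

import Mathlib

open Matrix

open Finset

variable {E : Type*} [NormedAddCommGroup E] [NormedSpace ℝ E] [FiniteDimensional ℝ E]
variable {ι : Type*} [Fintype ι] [DecidableEq ι]

/-- The cone generated by finitely many vectors (indexed by a finset) is closed. -/
theorem isClosed_finsetCone (v : ι → E) (S : Finset ι) :
    IsClosed {x : E | ∃ π : ι → ℝ, (∀ i, 0 ≤ π i) ∧ x = ∑ i ∈ S, π i • v i} := by
  classical
  induction S using Finset.strongInduction with
  | _ S ih =>
  by_cases hli : LinearIndependent ℝ (fun i : ↥S => v i)
  · -- linearly independent case: image of the nonneg orthant under a closed embedding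
    set L : (↥S → ℝ) →ₗ[ℝ] E :=
      { toFun := fun π => ∑ i : ↥S, π i • v i
        map_add' := by
          intro a b; simp [add_smul, Finset.sum_add_distrib]
        map_smul' := by
          intro c a; simp [smul_smul, Finset.smul_sum] }
    have hker : LinearMap.ker L = ⊥ := by
      rw [LinearMap.ker_eq_bot']
      intro m hm
      have := (Fintype.linearIndependent_iff.mp hli) m hm
      funext i; exact this i
    have hemb := LinearMap.isClosedEmbedding_of_injective (f := L) hker
    have hset : {x : E | ∃ π : ι → ℝ, (∀ i, 0 ≤ π i) ∧ x = ∑ i ∈ S, π i • v i}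
        = L '' {π : ↥S → ℝ | ∀ i, 0 ≤ π i} := by
      ext x
      constructor
      · rintro ⟨π, hπ, rfl⟩
        refine ⟨fun i => π i, fun i => hπ i, ?_⟩
        simp only [L, LinearMap.coe_mk, AddHom.coe_mk]
        change ∑ i : ↥S, _ = _
        rw [← Finset.sum_attach S (fun i => π i • v i), Finset.univ_eq_attach]
      · rintro ⟨π, hπ, rfl⟩
        refine ⟨fun i => if h : i ∈ S then π ⟨i, h⟩ else 0, ?_, ?_⟩
        · intro i
          by_cases h : i ∈ S
          · simpa [h] using hπ ⟨i, h⟩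
          · simp [h]
        · simp only [L, LinearMap.coe_mk, AddHom.coe_mk]
          change ∑ i : ↥S, _ = _
          rw [← Finset.sum_attach S (fun i => (if h : i ∈ S then π ⟨i, h⟩ else 0) • v i),
            Finset.univ_eq_attach]
          apply Finset.sum_congr rfl
          intro i _; simp [i.2]
    rw [hset]
    have horth : IsClosed {π : ↥S → ℝ | ∀ i, 0 ≤ π i} := by
      have : {π : ↥S → ℝ | ∀ i, 0 ≤ π i} = ⋂ i, {π | 0 ≤ π i} := by ext; simp [Set.mem_iInter]
      rw [this]
      exact isClosed_iInter fun i => isClosed_le continuous_const (continuous_apply i)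
    exact hemb.isClosedMap _ horth
  · -- linearly dependent case: the cone is a finite union of cones on smaller index sets
    obtain ⟨g, hgsum, i₁, hgi₁⟩ := Fintype.not_linearIndependent_iff.mp hli
    set G : ι → ℝ := fun i => if hi : i ∈ S then g ⟨i, hi⟩ else 0 with hGdef
    have hGsum : ∑ i ∈ S, G i • v i = 0 := by
      rw [← Finset.sum_attach S (fun i => G i • v i)]
      rw [← hgsum, Finset.univ_eq_attach]
      apply Finset.sum_congr rfl
      intro i _
      simp [G, i.2]
    have hGne : G (i₁ : ι) ≠ 0 := by simpa [G, i₁.2] using hgi₁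
    have claim : ∀ G' : ι → ℝ, (∑ i ∈ S, G' i • v i = 0) → (∃ i ∈ S, 0 < G' i) →
        ∀ x (π : ι → ℝ), (∀ i, 0 ≤ π i) → x = ∑ i ∈ S, π i • v i →
        ∃ i ∈ S, G' i ≠ 0 ∧
          ∃ π' : ι → ℝ, (∀ j, 0 ≤ π' j) ∧ x = ∑ j ∈ S.erase i, π' j • v j := by
      intro G' hG'sum hpos x π hπ hx
      set T : Finset ι := S.filter (fun i => 0 < G' i) with hT
      have hTne : T.Nonempty := by
        obtain ⟨i, hiS, hiG⟩ := hpos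
        exact ⟨i, Finset.mem_filter.mpr ⟨hiS, hiG⟩⟩
      set tmin : ℝ := T.inf' hTne (fun i => π i / G' i) with htmin
      obtain ⟨i₀, hi₀T, hti₀⟩ := Finset.exists_mem_eq_inf' hTne (fun i => π i / G' i)
      have hi₀S : i₀ ∈ S := (Finset.mem_filter.mp hi₀T).1
      have hG'i₀ : 0 < G' i₀ := (Finset.mem_filter.mp hi₀T).2
      have htnonneg : 0 ≤ tmin := by
        rw [htmin, hti₀]; exact div_nonneg (hπ i₀) hG'i₀.le
      refine ⟨i₀, hi₀S, hG'i₀.ne', ?_⟩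
      refine ⟨fun j => if j ∈ S.erase i₀ then π j - tmin * G' j else 0, ?_, ?_⟩
      · intro j
        by_cases hj : j ∈ S.erase i₀
        · simp only [hj, if_true]
          by_cases hGj : 0 < G' j
          · have hjT : j ∈ T := Finset.mem_filter.mpr ⟨(Finset.mem_erase.mp hj).2, hGj⟩
            have := Finset.inf'_le (fun i => π i / G' i) hjT
            rw [← htmin] at this
            have := (le_div_iff₀ hGj).mp this
            linarith
          · push_neg at hGj
            nlinarith [hπ j, mul_nonneg htnonneg (neg_nonneg.mpr hGj)]
        · simp [hj]
      · have hzero : π i₀ - tmin * G' i₀ = 0 := by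
          rw [htmin, hti₀, div_mul_cancel₀ _ hG'i₀.ne']
          ring
        have hsum1 : ∑ j ∈ S.erase i₀, (if j ∈ S.erase i₀ then π j - tmin * G' j else 0) • v j
            = ∑ j ∈ S.erase i₀, (π j - tmin * G' j) • v j := by
          apply Finset.sum_congr rfl
          intro j hj; simp [hj]
        rw [hsum1]
        have hsum2 : ∑ j ∈ S, (π j - tmin * G' j) • v j
            = ∑ j ∈ S.erase i₀, (π j - tmin * G' j) • v j := by
          rw [← Finset.add_sum_erase S _ hi₀S, hzero]
          simp
        rw [← hsum2]
        have : ∑ j ∈ S, (π j - tmin * G' j) • v j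
            = (∑ j ∈ S, π j • v j) - tmin • ∑ j ∈ S, G' j • v j := by
          rw [Finset.smul_sum, ← Finset.sum_sub_distrib]
          apply Finset.sum_congr rfl
          intro j _
          rw [sub_smul, smul_smul]
        rw [this, hG'sum, smul_zero, sub_zero, hx]
    have hset : {x : E | ∃ π : ι → ℝ, (∀ i, 0 ≤ π i) ∧ x = ∑ i ∈ S, π i • v i}
        = ⋃ i ∈ S.filter (fun i => G i ≠ 0),
            {x : E | ∃ π : ι → ℝ, (∀ j, 0 ≤ π j) ∧ x = ∑ j ∈ S.erase i, π j • v j} := by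
      ext x
      simp only [Set.mem_iUnion, Set.mem_setOf_eq, exists_prop]
      constructor
      · rintro ⟨π, hπ, hx⟩
        by_cases hpos : ∃ i ∈ S, 0 < G i
        · obtain ⟨i, hiS, hiG, hrest⟩ := claim G hGsum hpos x π hπ hx
          exact ⟨i, Finset.mem_filter.mpr ⟨hiS, hiG⟩, hrest⟩
        · have hneg : ∃ i ∈ S, 0 < (-G) i := by
            push_neg at hpos
            refine ⟨i₁, i₁.2, ?_⟩
            have := hpos (i₁ : ι) i₁.2
            simp only [Pi.neg_apply]
            rcases lt_or_eq_of_le this with hlt | heq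
            · linarith
            · exact absurd heq hGne
          have hnegsum : ∑ i ∈ S, (-G) i • v i = 0 := by
            simp only [Pi.neg_apply, neg_smul]
            rw [Finset.sum_neg_distrib, hGsum, neg_zero]
          obtain ⟨i, hiS, hiG, hrest⟩ := claim (-G) hnegsum hneg x π hπ hx
          refine ⟨i, Finset.mem_filter.mpr ⟨hiS, ?_⟩, hrest⟩
          simpa using hiG
      · rintro ⟨i, hifil, π, hπ, hx⟩
        refine ⟨fun j => if j ∈ S.erase i then π j else 0, ?_, ?_⟩
        · intro j; by_cases hj : j ∈ S.erase i <;> simp [hj, hπ]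
        · rw [hx]
          rw [← Finset.sum_subset (Finset.erase_subset i S)
            (by intro j _ hj; simp [hj])]
          apply Finset.sum_congr rfl
          intro j hj; simp [hj]
    rw [hset]
    apply isClosed_biUnion_finset
    intro i hi
    exact ih _ (Finset.erase_ssubset (Finset.mem_of_mem_filter i hi))

/-- Farkas lemma / Gale's theorem for systems of linear inequalities. -/
theorem farkas_ineq {ι κ : Type*} [Fintype ι] [Fintype κ] [DecidableEq κ]
    (A : ι → κ → ℝ) (b : ι → ℝ)
    (hinfeas : ¬ ∃ w : κ → ℝ, ∀ i, A i ⬝ᵥ w ≤ b i) :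
    ∃ π : ι → ℝ, (∀ i, 0 ≤ π i) ∧ (∀ j, ∑ i, π i * A i j = 0) ∧ ∑ i, π i * b i < 0 := by
  classical
  set gen : ι ⊕ Unit → (κ → ℝ) × ℝ := fun i =>
    Sum.elim (fun i => (A i, b i)) (fun _ => (0, 1)) i with hgen
  set C : Set ((κ → ℝ) × ℝ) :=
    {x | ∃ π : ι ⊕ Unit → ℝ, (∀ i, 0 ≤ π i) ∧ x = ∑ i, π i • gen i} with hC
  by_cases hmem : ((0 : κ → ℝ), (-1 : ℝ)) ∈ C
  · obtain ⟨π, hπ, hsum⟩ := hmem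
    refine ⟨fun i => π (Sum.inl i), fun i => hπ _, ?_, ?_⟩
    · intro j
      have h1 := congrArg (fun q => q.1 j) hsum
      simp only [Fintype.sum_sum_type, Finset.univ_unique, Finset.sum_singleton] at h1
      simp only [Prod.fst_add, Prod.fst_sum, Prod.smul_fst, Finset.sum_apply, Pi.add_apply,
        Pi.smul_apply, smul_eq_mul, gen, Sum.elim_inl, Sum.elim_inr, Pi.zero_apply,
        mul_zero, add_zero] at h1
      exact h1.symm
    · have h2 := congrArg (fun q => q.2) hsum
      simp only [Fintype.sum_sum_type, Finset.univ_unique, Finset.sum_singleton, Prod.snd_add,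
        Prod.snd_sum, Prod.smul_snd, smul_eq_mul, gen, Sum.elim_inl, Sum.elim_inr,
        mul_one] at h2
      have := hπ (Sum.inr ())
      linarith
  · -- separate and build a feasible point, contradiction
    exfalso
    have hclosed : IsClosed C := by
      have := isClosed_finsetCone gen (Finset.univ : Finset (ι ⊕ Unit))
      simpa [hC] using this
    have hconv : Convex ℝ C := by
      rintro a ⟨π, hπ, rfl⟩ a' ⟨π', hπ', rfl⟩ θ θ' hθ hθ' hθθ
      refine ⟨fun i => θ * π i + θ' * π' i,
        fun i => add_nonneg (mul_nonneg hθ (hπ i)) (mul_nonneg hθ' (hπ' i)), ?_⟩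
      rw [Finset.smul_sum, Finset.smul_sum, ← Finset.sum_add_distrib]
      apply Finset.sum_congr rfl
      intro i _
      rw [add_smul, smul_smul, smul_smul]
    obtain ⟨φ, u, hφlt, hφgt⟩ := geometric_hahn_banach_closed_point hconv hclosed hmem
    have h0C : (0 : (κ → ℝ) × ℝ) ∈ C := ⟨0, fun i => le_refl 0, by simp⟩
    have hu : 0 < u := by have := hφlt 0 h0C; simpa using this
    have hsmulC : ∀ a ∈ C, ∀ c : ℝ, 0 ≤ c → c • a ∈ C := by
      rintro a ⟨π, hπ, rfl⟩ c hc
      refine ⟨fun i => c * π i, fun i => mul_nonneg hc (hπ i), ?_⟩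
      rw [Finset.smul_sum]
      apply Finset.sum_congr rfl
      intro i _; rw [smul_smul]
    have hφle : ∀ a ∈ C, φ a ≤ 0 := by
      intro a ha
      by_contra hpos
      push_neg at hpos
      have hc : (0:ℝ) ≤ u / φ a := le_of_lt (div_pos hu hpos)
      have := hφlt _ (hsmulC a ha _ hc)
      rw [_root_.map_smul, smul_eq_mul, div_mul_cancel₀ _ hpos.ne'] at this
      exact lt_irrefl u this
    have hgenC : ∀ i, gen i ∈ C := by
      intro i
      refine ⟨fun i' => if i' = i then 1 else 0, ?_, ?_⟩
      · intro i'; dsimp only; split <;> norm_num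
      · symm; simp [ite_smul]
    set y : κ → ℝ := fun j => φ ((Pi.single j (1:ℝ)), (0:ℝ)) with hy
    set ξ : ℝ := φ ((0 : κ → ℝ), (1:ℝ)) with hξ
    have hdecomp : ∀ (w : κ → ℝ) (s : ℝ), φ (w, s) = (∑ j, w j * y j) + s * ξ := by
      intro w s
      have hrep : ((w, s) : (κ → ℝ) × ℝ)
          = (∑ j, w j • (((Pi.single j (1:ℝ)) : κ → ℝ), (0:ℝ))) + s • ((0 : κ → ℝ), (1:ℝ)) := by
        refine Prod.ext ?_ ?_
        · simp only [Prod.fst_add, Prod.fst_sum, Prod.smul_fst, Prod.smul_snd]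
          funext j
          simp [Finset.sum_apply, Pi.single_apply]
        · simp [Prod.snd_sum]
      rw [hrep, map_add, map_sum]
      simp only [_root_.map_smul, smul_eq_mul]
      rfl
    have hξneg : ξ < 0 := by
      have h1 : ξ ≤ 0 := by
        have := hφle _ (hgenC (Sum.inr ()))
        simpa [gen, hξ] using this
      have h2 : 0 < -ξ := by
        have := hφgt
        have hval : φ ((0 : κ → ℝ), (-1 : ℝ)) = -ξ := by
          have : ((0 : κ → ℝ), (-1 : ℝ)) = -(((0 : κ → ℝ), (1 : ℝ))) := by simp [Prod.ext_iff]
          rw [this, map_neg, hξ]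
        linarith [hφgt, hval ▸ hφgt, hu]
      linarith
    have hrow : ∀ i, (∑ j, A i j * y j) + b i * ξ ≤ 0 := by
      intro i
      have := hφle _ (hgenC (Sum.inl i))
      simp only [hgen, Sum.elim_inl] at this
      rwa [hdecomp] at this
    apply hinfeas
    refine ⟨(-ξ)⁻¹ • y, fun i => ?_⟩
    have h1 : ∑ j, A i j * y j ≤ b i * (-ξ) := by have := hrow i; linarith
    have hpos : 0 < -ξ := by linarith
    calc A i ⬝ᵥ ((-ξ)⁻¹ • y) = (-ξ)⁻¹ * ∑ j, A i j * y j := by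
          simp [dotProduct, Finset.mul_sum]; apply Finset.sum_congr rfl; intro j _; ring
      _ ≤ (-ξ)⁻¹ * (b i * (-ξ)) := by
          apply mul_le_mul_of_nonneg_left h1 (inv_nonneg.mpr hpos.le)
      _ = b i := by
          rw [show (-ξ)⁻¹ * (b i * -ξ) = b i * ((-ξ)⁻¹ * -ξ) by ring,
            inv_mul_cancel₀ hpos.ne', mul_one]

section Helpers
variable {n : ℕ}

lemma continuous_dot_right (w : Fin n → ℝ) : Continuous fun ρ : Fin n → ℝ => ρ ⬝ᵥ w := by
  unfold dotProduct
  exact continuous_finset_sum _ fun i _ => ((continuous_apply i).mul continuous_const)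

lemma clm_pi_repr (φ : (Fin n → ℝ) →L[ℝ] ℝ) (w : Fin n → ℝ) :
    φ w = w ⬝ᵥ (fun j => φ (Pi.single j 1)) := by
  have hrep : w = ∑ j, w j • (Pi.single j (1:ℝ) : Fin n → ℝ) := by
    funext i
    simp [Finset.sum_apply, Pi.single_apply]
  conv_lhs => rw [hrep]
  rw [map_sum]
  simp only [_root_.map_smul, smul_eq_mul]
  rfl

lemma clm_prod_repr (φ : ((Fin n → ℝ) × ℝ) →L[ℝ] ℝ) (w : Fin n → ℝ) (s : ℝ) :
    φ (w, s) = w ⬝ᵥ (fun j => φ (Pi.single j 1, 0)) + s * φ (0, 1) := by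
  have hrep : ((w, s) : (Fin n → ℝ) × ℝ)
      = (∑ j, w j • (((Pi.single j (1:ℝ)) : Fin n → ℝ), (0:ℝ))) + s • ((0 : Fin n → ℝ), (1:ℝ)) := by
    refine Prod.ext ?_ ?_
    · simp only [Prod.fst_add, Prod.fst_sum, Prod.smul_fst, Prod.smul_snd]
      funext j
      simp [Finset.sum_apply, Pi.single_apply]
    · simp [Prod.snd_sum]
  rw [hrep, map_add, map_sum]
  simp only [_root_.map_smul, smul_eq_mul]
  rfl

end Helpers

section Conic

variable {ny nf : ℕ} (B : Matrix (Fin nf) (Fin ny) ℝ) (d : Fin ny → ℝ) (K : Set (Fin nf → ℝ))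

/-- Sum of two elements of a convex cone. -/
lemma cone_add (hKconv : Convex ℝ K) (hKcone : ∀ v ∈ K, ∀ c : ℝ, 0 ≤ c → c • v ∈ K)
    {a b : Fin nf → ℝ} (ha : a ∈ K) (hb : b ∈ K) : a + b ∈ K := by
  have hmid : (1/2 : ℝ) • a + (1/2 : ℝ) • b ∈ K :=
    hKconv ha hb (by norm_num) (by norm_num) (by norm_num)
  have := hKcone _ hmid 2 (by norm_num)
  rwa [smul_add, smul_smul, smul_smul, show (2:ℝ) * (1/2) = 1 by norm_num, one_smul,
    one_smul] at this

lemma cone_zero_mem (hKcone : ∀ v ∈ K, ∀ c : ℝ, 0 ≤ c → c • v ∈ K)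
    (hne : K.Nonempty) : (0 : Fin nf → ℝ) ∈ K := by
  obtain ⟨v, hv⟩ := hne
  simpa using hKcone v hv 0 le_rfl

/-- If `ρ ∈ K*` and `Bᵀρ = 0` then `ρ = 0`, under complete recourse. -/
lemma dual_ker_trivial (hcomplete : ∀ v : Fin nf → ℝ, ∃ y : Fin ny → ℝ, B.mulVec y - v ∈ K)
    {ρ : Fin nf → ℝ} (hρK : ∀ w ∈ K, 0 ≤ ρ ⬝ᵥ w) (hρB : Bᵀ.mulVec ρ = 0) : ρ = 0 := by
  have key : ∀ w : Fin nf → ℝ, ρ ⬝ᵥ w ≤ 0 := by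
    intro w
    obtain ⟨y, hy⟩ := hcomplete w
    have h1 : 0 ≤ ρ ⬝ᵥ (B.mulVec y - w) := hρK _ hy
    have h2 : ρ ⬝ᵥ B.mulVec y = 0 := by
      rw [dotProduct_mulVec, ← Matrix.mulVec_transpose, hρB, zero_dotProduct]
    rw [dotProduct_sub, h2] at h1
    linarith
  have : ∀ w : Fin nf → ℝ, ρ ⬝ᵥ w = 0 := by
    intro w
    have h1 := key w
    have h2 := key (-w)
    rw [dotProduct_neg] at h2
    linarith
  funext i
  have := this (Pi.single i 1)
  simpa [dotProduct, Pi.single_apply] using this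

/-- The image of the dual cone under `Bᵀ` is closed (complete recourse). -/
lemma isClosed_dual_image (hKclosed : IsClosed K)
    (hcomplete : ∀ v : Fin nf → ℝ, ∃ y : Fin ny → ℝ, B.mulVec y - v ∈ K) :
    IsClosed {w : Fin ny → ℝ | ∃ ρ : Fin nf → ℝ, (∀ u ∈ K, 0 ≤ ρ ⬝ᵥ u) ∧ Bᵀ.mulVec ρ = w} := by
  have hKstarclosed : IsClosed {ρ : Fin nf → ℝ | ∀ u ∈ K, 0 ≤ ρ ⬝ᵥ u} := by
    have : {ρ : Fin nf → ℝ | ∀ u ∈ K, 0 ≤ ρ ⬝ᵥ u} = ⋂ u ∈ K, {ρ | 0 ≤ ρ ⬝ᵥ u} := by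
      ext ρ; simp [Set.mem_iInter]
    rw [this]
    exact isClosed_biInter fun u _ => isClosed_le continuous_const (continuous_dot_right u)
  have hcont : Continuous fun ρ : Fin nf → ℝ => Bᵀ.mulVec ρ :=
    (Matrix.mulVecLin Bᵀ).continuous_of_finiteDimensional
  apply IsSeqClosed.isClosed
  intro x w hmem htend
  have hchoice : ∀ m, ∃ ρ : Fin nf → ℝ, (∀ u ∈ K, 0 ≤ ρ ⬝ᵥ u) ∧ Bᵀ.mulVec ρ = x m := hmem
  choose ρ hρK hρB using hchoice
  -- the sequence ρ is bounded
  by_cases hbdd : ∃ C : ℝ, ∀ m, ‖ρ m‖ ≤ C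
  · obtain ⟨C, hC⟩ := hbdd
    have hball : ∀ m, ρ m ∈ Metric.closedBall (0 : Fin nf → ℝ) C := by
      intro m; simpa [Metric.mem_closedBall, dist_zero_right] using hC m
    obtain ⟨ρbar, _, ψ, hψ, hψtend⟩ :=
      (isCompact_closedBall (0 : Fin nf → ℝ) C).tendsto_subseq hball
    have hρbarK : ∀ u ∈ K, 0 ≤ ρbar ⬝ᵥ u := by
      intro u hu
      have : Filter.Tendsto (fun m => (ρ (ψ m)) ⬝ᵥ u) Filter.atTop (nhds (ρbar ⬝ᵥ u)) :=
        ((continuous_dot_right u).tendsto _).comp hψtend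
      exact le_of_tendsto_of_tendsto' tendsto_const_nhds this fun m => hρK (ψ m) u hu
    refine ⟨ρbar, hρbarK, ?_⟩
    have h1 : Filter.Tendsto (fun m => Bᵀ.mulVec (ρ (ψ m))) Filter.atTop (nhds (Bᵀ.mulVec ρbar)) :=
      (hcont.tendsto _).comp hψtend
    have h2 : Filter.Tendsto (fun m => Bᵀ.mulVec (ρ (ψ m))) Filter.atTop (nhds w) := by
      simp only [hρB]
      exact htend.comp (hψ.tendsto_atTop)
    exact tendsto_nhds_unique h1 h2
  · exfalso
    push_neg at hbdd
    have hsel : ∀ m : ℕ, ∃ j, (m : ℝ) + 1 ≤ ‖ρ j‖ := by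
      intro m
      obtain ⟨j, hj⟩ := hbdd ((m : ℝ) + 1)
      exact ⟨j, hj.le⟩
    choose sel hsel' using hsel
    have hne : ∀ m, ρ (sel m) ≠ 0 := by
      intro m hz
      have h1 := hsel' m
      rw [hz, norm_zero] at h1
      have h2 : (0:ℝ) < (m:ℝ) + 1 := by positivity
      linarith
    set u : ℕ → (Fin nf → ℝ) := fun m => ‖ρ (sel m)‖⁻¹ • ρ (sel m) with hu
    have husphere : ∀ m, u m ∈ Metric.sphere (0 : Fin nf → ℝ) 1 := by
      intro m
      simp only [u, Metric.mem_sphere, dist_zero_right, norm_smul, norm_inv, norm_norm]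
      rw [inv_mul_cancel₀ (norm_ne_zero_iff.mpr (hne m))]
    obtain ⟨ρbar, hρbarmem, ψ, hψ, hψtend⟩ := (isCompact_sphere (0 : Fin nf → ℝ) 1).tendsto_subseq husphere
    have hρbarK : ∀ v ∈ K, 0 ≤ ρbar ⬝ᵥ v := by
      intro v hv
      have : Filter.Tendsto (fun m => (u (ψ m)) ⬝ᵥ v) Filter.atTop (nhds (ρbar ⬝ᵥ v)) :=
        ((continuous_dot_right v).tendsto _).comp hψtend
      refine le_of_tendsto_of_tendsto' tendsto_const_nhds this fun m => ?_
      have := hρK (sel (ψ m)) v hv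
      simp only [u, smul_dotProduct, smul_eq_mul]
      exact mul_nonneg (inv_nonneg.mpr (norm_nonneg _)) this
    have hCx : ∃ Cx : ℝ, 0 ≤ Cx ∧ ∀ m, ‖x m‖ ≤ Cx := by
      obtain ⟨Cx, hCx⟩ := htend.norm.bddAbove_range
      refine ⟨Cx, le_trans (norm_nonneg (x 0)) (hCx ⟨0, rfl⟩), fun m => hCx ⟨m, rfl⟩⟩
    obtain ⟨Cx, hCx0, hCx⟩ := hCx
    have hBu : Filter.Tendsto (fun m => Bᵀ.mulVec (u (ψ m))) Filter.atTop (nhds 0) := by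
      have hbnd : ∀ m : ℕ, ‖Bᵀ.mulVec (u (ψ m))‖ ≤ Cx * ((m : ℝ) + 1)⁻¹ := by
        intro m
        have heq : Bᵀ.mulVec (u (ψ m)) = ‖ρ (sel (ψ m))‖⁻¹ • x (sel (ψ m)) := by
          rw [hu]
          simp only [Matrix.mulVec_smul]
          rw [hρB]
        rw [heq, norm_smul, norm_inv, norm_norm]
        have hψm : ((m : ℝ) + 1) ≤ ‖ρ (sel (ψ m))‖ := by
          have h1 := hsel' (ψ m)
          have h2 : (m : ℝ) ≤ (ψ m : ℝ) := by exact_mod_cast hψ.le_apply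
          linarith
        have hpos : (0:ℝ) < (m : ℝ) + 1 := by positivity
        have hinv : ‖ρ (sel (ψ m))‖⁻¹ ≤ ((m : ℝ) + 1)⁻¹ :=
          inv_anti₀ hpos hψm
        calc ‖ρ (sel (ψ m))‖⁻¹ * ‖x (sel (ψ m))‖
            ≤ ((m : ℝ) + 1)⁻¹ * Cx :=
              mul_le_mul hinv (hCx _) (norm_nonneg _) (by positivity)
          _ = Cx * ((m : ℝ) + 1)⁻¹ := by ring
      have htend0 : Filter.Tendsto (fun m : ℕ => Cx * ((m : ℝ) + 1)⁻¹) Filter.atTop (nhds 0) := by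
        have h0 : Filter.Tendsto (fun m : ℕ => ((m : ℝ) + 1)⁻¹) Filter.atTop (nhds 0) := by
          simpa [one_div] using tendsto_one_div_add_atTop_nhds_zero_nat (𝕜 := ℝ)
        simpa using h0.const_mul Cx
      exact squeeze_zero_norm hbnd htend0
    have h1 : Filter.Tendsto (fun m => Bᵀ.mulVec (u (ψ m))) Filter.atTop
        (nhds (Bᵀ.mulVec ρbar)) := (hcont.tendsto _).comp hψtend
    have hBρbar : Bᵀ.mulVec ρbar = 0 := tendsto_nhds_unique h1 hBu
    have := dual_ker_trivial B K hcomplete hρbarK hBρbar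
    rw [this] at hρbarmem
    simp at hρbarmem

/-- Under complete and bounded recourse, the dual uncertainty set is nonempty. -/
lemma P_nonempty (hKclosed : IsClosed K) (hKconv : Convex ℝ K)
    (hKcone : ∀ v ∈ K, ∀ c : ℝ, 0 ≤ c → c • v ∈ K) (hKne : K.Nonempty)
    (hcomplete : ∀ v : Fin nf → ℝ, ∃ y : Fin ny → ℝ, B.mulVec y - v ∈ K)
    (hbounded : ¬ ∃ y : Fin ny → ℝ, B.mulVec y ∈ K ∧ d ⬝ᵥ y < 0) :
    ∃ ρ : Fin nf → ℝ, (∀ u ∈ K, 0 ≤ ρ ⬝ᵥ u) ∧ Bᵀ.mulVec ρ = d := by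
  set C : Set (Fin ny → ℝ) :=
    {w | ∃ ρ : Fin nf → ℝ, (∀ u ∈ K, 0 ≤ ρ ⬝ᵥ u) ∧ Bᵀ.mulVec ρ = w} with hCdef
  by_contra hno
  have hdC : d ∉ C := fun hd => hno hd
  have hCclosed : IsClosed C := isClosed_dual_image B K hKclosed hcomplete
  have hCconv : Convex ℝ C := by
    rintro w ⟨ρ, hρ, rfl⟩ w' ⟨ρ', hρ', rfl⟩ θ θ' hθ hθ' hθθ
    refine ⟨θ • ρ + θ' • ρ', ?_, ?_⟩
    · intro u hu
      have h1 := hρ u hu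
      have h2 := hρ' u hu
      simp only [add_dotProduct, smul_dotProduct, smul_eq_mul]
      exact add_nonneg (mul_nonneg hθ h1) (mul_nonneg hθ' h2)
    · simp [Matrix.mulVec_add, Matrix.mulVec_smul]
  obtain ⟨φ, u, hφlt, hφgt⟩ := geometric_hahn_banach_closed_point hCconv hCclosed hdC
  have h0C : (0 : Fin ny → ℝ) ∈ C := ⟨0, fun u hu => by simp, by simp⟩
  have hu : 0 < u := by have := hφlt 0 h0C; simpa using this
  have hφle : ∀ w ∈ C, φ w ≤ 0 := by
    intro w hw
    by_contra hpos
    push_neg at hpos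
    have hscale : ∀ c : ℝ, 0 ≤ c → c • w ∈ C := by
      rintro c hc
      obtain ⟨ρ, hρ, hB⟩ := hw
      refine ⟨c • ρ, ?_, by rw [Matrix.mulVec_smul, hB]⟩
      intro v hv
      simp only [smul_dotProduct, smul_eq_mul]
      exact mul_nonneg hc (hρ v hv)
    have := hφlt _ (hscale (u / φ w) (le_of_lt (div_pos hu hpos)))
    rw [_root_.map_smul, smul_eq_mul, div_mul_cancel₀ _ hpos.ne'] at this
    exact lt_irrefl u this
  set y₀ : Fin ny → ℝ := fun j => φ (Pi.single j 1) with hy₀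
  have hφrepr : ∀ w, φ w = w ⬝ᵥ y₀ := fun w => clm_pi_repr φ w
  -- the vector -y₀ satisfies B(-y₀) ∈ K and d ⬝ (-y₀) < 0
  have hdy₀ : 0 < d ⬝ᵥ y₀ := by
    have := hφgt
    rw [hφrepr d] at this
    linarith
  have hBy : ∀ ρ, (∀ u ∈ K, 0 ≤ ρ ⬝ᵥ u) → 0 ≤ ρ ⬝ᵥ B.mulVec (-y₀) := by
    intro ρ hρ
    have h1 : φ (Bᵀ.mulVec ρ) ≤ 0 := hφle _ ⟨ρ, hρ, rfl⟩
    rw [hφrepr] at h1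
    have h2 : Bᵀ.mulVec ρ ⬝ᵥ y₀ = ρ ⬝ᵥ B.mulVec y₀ := by
      rw [Matrix.mulVec_transpose, ← Matrix.dotProduct_mulVec]
    rw [h2] at h1
    rw [Matrix.mulVec_neg, dotProduct_neg]
    linarith
  have hByK : B.mulVec (-y₀) ∈ K := by
    by_contra hnotin
    obtain ⟨ψ, u', hψlt, hψgt⟩ :=
      geometric_hahn_banach_closed_point hKconv hKclosed hnotin
    have h0K : (0 : Fin nf → ℝ) ∈ K := cone_zero_mem K hKcone hKne
    have hu' : 0 < u' := by have := hψlt 0 h0K; simpa using this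
    have hψle : ∀ w ∈ K, ψ w ≤ 0 := by
      intro w hw
      by_contra hpos
      push_neg at hpos
      have := hψlt _ (hKcone w hw (u' / ψ w) (le_of_lt (div_pos hu' hpos)))
      rw [_root_.map_smul, smul_eq_mul, div_mul_cancel₀ _ hpos.ne'] at this
      exact lt_irrefl u' this
    set ρ₁ : Fin nf → ℝ := fun j => -ψ (Pi.single j 1) with hρ₁
    have hρ₁K : ∀ w ∈ K, 0 ≤ ρ₁ ⬝ᵥ w := by
      intro w hw
      have := hψle w hw
      rw [clm_pi_repr ψ w] at this
      have heq : ρ₁ ⬝ᵥ w = -(w ⬝ᵥ fun j => ψ (Pi.single j 1)) := by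
        simp [dotProduct, hρ₁, Finset.sum_neg_distrib]
        apply Finset.sum_congr rfl
        intro i _; ring
      rw [heq]
      linarith
    have h1 := hBy ρ₁ hρ₁K
    have h2 : ψ (B.mulVec (-y₀)) ≤ 0 := by
      have heq : ψ (B.mulVec (-y₀)) = -(ρ₁ ⬝ᵥ B.mulVec (-y₀)) := by
        rw [clm_pi_repr ψ]
        simp [dotProduct, hρ₁, Finset.sum_neg_distrib]
        apply Finset.sum_congr rfl
        intro i _; ring
      rw [heq]
      linarith
    linarith
  refine hbounded ⟨-y₀, hByK, ?_⟩
  rw [dotProduct_neg]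
  linarith

/-- Strong conic duality step: if every dual-feasible `ρ` has `ρ⬝v ≤ r`, then for every
`ε > 0` there is a primal-feasible `y` with `d⬝y ≤ r + ε`. -/
lemma conic_dual_bound (hKclosed : IsClosed K) (hKconv : Convex ℝ K)
    (hKcone : ∀ v ∈ K, ∀ c : ℝ, 0 ≤ c → c • v ∈ K)
    (hKsolid : (interior K).Nonempty)
    (hcomplete : ∀ v : Fin nf → ℝ, ∃ y : Fin ny → ℝ, B.mulVec y - v ∈ K)
    (v : Fin nf → ℝ) (r : ℝ)
    (hdual : ∀ ρ : Fin nf → ℝ, (∀ w ∈ K, 0 ≤ ρ ⬝ᵥ w) → Bᵀ.mulVec ρ = d → ρ ⬝ᵥ v ≤ r) :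
    ∀ ε > 0, ∃ y : Fin ny → ℝ, B.mulVec y - v ∈ K ∧ d ⬝ᵥ y ≤ r + ε := by
  have hKne : K.Nonempty := ⟨_, interior_subset hKsolid.choose_spec⟩
  have h0K : (0 : Fin nf → ℝ) ∈ K := cone_zero_mem K hKcone hKne
  set S : Set ((Fin nf → ℝ) × ℝ) :=
    {q | ∃ y : Fin ny → ℝ, ∃ κ ∈ K, ∃ θ : ℝ, 0 ≤ θ ∧ q = (B.mulVec y - κ, d ⬝ᵥ y + θ)} with hS
  have h0S : (0 : (Fin nf → ℝ) × ℝ) ∈ S := ⟨0, 0, h0K, 0, le_rfl, by simp [Prod.ext_iff]⟩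
  have hSconv : Convex ℝ S := by
    rintro q ⟨y, κ, hκ, θ, hθ0, rfl⟩ q' ⟨y', κ', hκ', θ', hθ'0, rfl⟩ a b ha hb hab
    refine ⟨a • y + b • y', a • κ + b • κ', hKconv hκ hκ' ha hb hab,
      a * θ + b * θ', add_nonneg (mul_nonneg ha hθ0) (mul_nonneg hb hθ'0), ?_⟩
    simp only [Prod.ext_iff, Prod.smul_fst, Prod.smul_snd, Prod.fst_add, Prod.snd_add,
      Prod.mk.injEq]
    constructor
    · rw [Matrix.mulVec_add, Matrix.mulVec_smul, Matrix.mulVec_smul]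
      module
    · simp only [smul_eq_mul, dotProduct_add, dotProduct_smul, smul_eq_mul]
      ring
  have hSsmul : ∀ q ∈ S, ∀ c : ℝ, 0 ≤ c → c • q ∈ S := by
    rintro q ⟨y, κ, hκ, θ, hθ0, rfl⟩ c hc
    refine ⟨c • y, c • κ, hKcone κ hκ c hc, c * θ, mul_nonneg hc hθ0, ?_⟩
    simp only [Prod.ext_iff, Prod.smul_fst, Prod.smul_snd, Prod.mk.injEq]
    constructor
    · rw [Matrix.mulVec_smul]; module
    · simp only [smul_eq_mul, dotProduct_smul, smul_eq_mul]; ring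
  -- Step 1: (v, r + ε') ∈ closure S for every ε' > 0
  have hclS : ∀ ε' : ℝ, 0 < ε' → ((v, r + ε') : (Fin nf → ℝ) × ℝ) ∈ closure S := by
    intro ε' hε'
    by_contra hnot
    obtain ⟨φ, u, hφlt, hφgt⟩ :=
      geometric_hahn_banach_closed_point (hSconv.closure) isClosed_closure hnot
    have hφle : ∀ q ∈ S, φ q ≤ 0 := by
      intro q hq
      by_contra hpos
      push_neg at hpos
      have := hφlt _ (subset_closure (hSsmul q hq (u / φ q)
        (le_of_lt (div_pos (by have := hφlt 0 (subset_closure h0S); simpa using this) hpos))))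
      rw [_root_.map_smul, smul_eq_mul, div_mul_cancel₀ _ hpos.ne'] at this
      exact lt_irrefl u this
    have hu : 0 < u := by have := hφlt 0 (subset_closure h0S); simpa using this
    set ρ₀ : Fin nf → ℝ := fun j => φ (Pi.single j 1, 0) with hρ₀
    set ξ : ℝ := φ (0, 1) with hξdef
    have hrepr : ∀ (w : Fin nf → ℝ) (s : ℝ), φ (w, s) = w ⬝ᵥ ρ₀ + s * ξ :=
      fun w s => clm_prod_repr φ w s
    have hξ0 : ξ ≤ 0 := by
      have := hφle (0, 1) ⟨0, 0, h0K, 1, zero_le_one, by simp [Prod.ext_iff]⟩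
      rw [hrepr] at this
      simpa using this
    have hlin : ∀ y : Fin ny → ℝ, (B.mulVec y) ⬝ᵥ ρ₀ + (d ⬝ᵥ y) * ξ = 0 := by
      intro y
      have h1 := hφle (B.mulVec y - 0, d ⬝ᵥ y + 0) ⟨y, 0, h0K, 0, le_rfl, rfl⟩
      have h2 := hφle (B.mulVec (-y) - 0, d ⬝ᵥ (-y) + 0) ⟨-y, 0, h0K, 0, le_rfl, rfl⟩
      rw [hrepr] at h1 h2
      simp only [sub_zero, add_zero, Matrix.mulVec_neg, dotProduct_neg, neg_dotProduct] at h1 h2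
      linarith
    have hKstar : ∀ κ ∈ K, 0 ≤ ρ₀ ⬝ᵥ κ := by
      intro κ hκ
      have := hφle (B.mulVec 0 - κ, d ⬝ᵥ 0 + 0) ⟨0, κ, hκ, 0, le_rfl, rfl⟩
      rw [hrepr] at this
      simp only [Matrix.mulVec_zero, zero_sub, dotProduct_zero, zero_add, zero_mul, add_zero,
        neg_dotProduct] at this
      rw [dotProduct_comm]
      linarith
    have hgtval : 0 < v ⬝ᵥ ρ₀ + (r + ε') * ξ := by
      have := hφgt
      rw [hrepr] at this
      linarith
    rcases lt_or_eq_of_le hξ0 with hξneg | hξzero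
    · -- ξ < 0 : normalize to an element of P
      set ρ : Fin nf → ℝ := (-ξ)⁻¹ • ρ₀ with hρdef
      have hρK : ∀ w ∈ K, 0 ≤ ρ ⬝ᵥ w := by
        intro w hw
        have := hKstar w hw
        simp only [hρdef, smul_dotProduct, smul_eq_mul]
        exact mul_nonneg (inv_nonneg.mpr (by linarith)) (by rwa [dotProduct_comm] at this ⊢)
      have hρB : Bᵀ.mulVec ρ = d := by
        have hvec : Bᵀ.mulVec ρ₀ = (-ξ) • d := by
          apply dotProduct_eq
          intro y
          have h1 := hlin y
          have hL : Bᵀ.mulVec ρ₀ ⬝ᵥ y = B.mulVec y ⬝ᵥ ρ₀ := by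
            rw [Matrix.mulVec_transpose, ← Matrix.dotProduct_mulVec]
            exact dotProduct_comm _ _
          have hR : ((-ξ) • d) ⬝ᵥ y = -ξ * (d ⬝ᵥ y) := by
            rw [smul_dotProduct, smul_eq_mul]
          rw [hL, hR]
          linarith
        rw [hρdef, Matrix.mulVec_smul, hvec, smul_smul,
          inv_mul_cancel₀ (by linarith : (-ξ) ≠ 0), one_smul]
      have hle := hdual ρ hρK hρB
      have hρv : ρ ⬝ᵥ v = (-ξ)⁻¹ * (v ⬝ᵥ ρ₀) := by
        rw [hρdef, smul_dotProduct, smul_eq_mul, dotProduct_comm]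
      have hpos : (0:ℝ) < -ξ := by linarith
      have hgt2 : (r + ε') * (-ξ) < v ⬝ᵥ ρ₀ := by nlinarith
      have hgt3 : r + ε' < ρ ⬝ᵥ v := by
        rw [hρv]
        have hmul := mul_lt_mul_of_pos_left hgt2 (inv_pos.mpr hpos)
        rwa [show (-ξ)⁻¹ * ((r + ε') * -ξ) = r + ε' by
          have hξne : ξ ≠ 0 := by linarith
          field_simp] at hmul
      linarith
    · -- ξ = 0 : ρ₀ kills everything, contradiction
      have hBρ₀ : Bᵀ.mulVec ρ₀ = 0 := by
        apply dotProduct_eq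
        intro y
        have h1 := hlin y
        rw [hξzero, mul_zero, add_zero] at h1
        have hL : Bᵀ.mulVec ρ₀ ⬝ᵥ y = B.mulVec y ⬝ᵥ ρ₀ := by
          rw [Matrix.mulVec_transpose, ← Matrix.dotProduct_mulVec]
          exact dotProduct_comm _ _
        rw [hL, h1, zero_dotProduct]
      have hρ₀K : ∀ w ∈ K, 0 ≤ ρ₀ ⬝ᵥ w := hKstar
      have hz := dual_ker_trivial B K hcomplete hρ₀K hBρ₀
      rw [hz, hξzero] at hgtval
      simp at hgtval
  -- Step 2: extract an exactly feasible point
  intro ε hε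
  obtain ⟨u₀, hu₀⟩ := hKsolid
  obtain ⟨δ₀, hδ₀, hball⟩ := Metric.mem_nhds_iff.mp (mem_interior_iff_mem_nhds.mp hu₀)
  obtain ⟨yhat, hyhat⟩ := hcomplete u₀
  set Cd : ℝ := |d ⬝ᵥ yhat| with hCd
  set ε₁ : ℝ := min (ε/3) ((ε/3) * δ₀ / (Cd + 1)) with hε₁
  have hCd0 : 0 ≤ Cd := abs_nonneg _
  have hε₁pos : 0 < ε₁ := by
    apply lt_min (by linarith)
    apply div_pos (by positivity) (by linarith)
  obtain ⟨q, hqS, hqdist⟩ := Metric.mem_closure_iff.mp (hclS (ε/3) (by linarith)) ε₁ hε₁pos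
  obtain ⟨y, κ, hκ, θ, hθ0, rfl⟩ := hqS
  rw [Prod.dist_eq] at hqdist
  have hd1 : dist v (B.mulVec y - κ) < ε₁ := lt_of_le_of_lt (le_max_left _ _) hqdist
  have hd2 : dist (r + ε/3) (d ⬝ᵥ y + θ) < ε₁ := lt_of_le_of_lt (le_max_right _ _) hqdist
  set e : Fin nf → ℝ := (B.mulVec y - κ) - v with he
  have hnorme : ‖e‖ < ε₁ := by
    calc ‖e‖ = dist v (B.mulVec y - κ) := by rw [he, dist_eq_norm']
      _ < ε₁ := hd1
  set c₁ : ℝ := ε₁ / δ₀ with hc₁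
  have hc₁pos : 0 < c₁ := div_pos hε₁pos hδ₀
  refine ⟨y + c₁ • yhat, ?_, ?_⟩
  · have hdecomp : B.mulVec (y + c₁ • yhat) - v
        = κ + (c₁ • (B.mulVec yhat - u₀) + c₁ • (u₀ + (δ₀/ε₁) • e)) := by
      rw [Matrix.mulVec_add, Matrix.mulVec_smul]
      have : (δ₀/ε₁) • e = (δ₀/ε₁) • e := rfl
      have hee : c₁ • ((δ₀/ε₁) • e) = e := by
        rw [smul_smul, hc₁, div_mul_div_comm, mul_comm]
        rw [div_self (by positivity)]
        exact one_smul _ e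
      have hByv : B.mulVec y - v = κ + e := by rw [he]; module
      calc B.mulVec y + c₁ • B.mulVec yhat - v
          = (B.mulVec y - v) + c₁ • B.mulVec yhat := by module
        _ = κ + e + c₁ • B.mulVec yhat := by rw [hByv]
        _ = κ + (c₁ • (B.mulVec yhat - u₀) + (c₁ • u₀ + e)) := by module
        _ = κ + (c₁ • (B.mulVec yhat - u₀) + c₁ • (u₀ + (δ₀/ε₁) • e)) := by
            rw [smul_add, hee]
    rw [hdecomp]
    apply cone_add K hKconv hKcone hκ
    apply cone_add K hKconv hKcone
    · exact hKcone _ hyhat c₁ hc₁pos.le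
    · apply hKcone _ _ c₁ hc₁pos.le
      apply hball
      rw [Metric.mem_ball]
      have : dist (u₀ + (δ₀/ε₁) • e) u₀ = ‖(δ₀/ε₁) • e‖ := by
        rw [dist_eq_norm]; congr 1; module
      rw [this, norm_smul, Real.norm_eq_abs, abs_of_pos (div_pos hδ₀ hε₁pos)]
      calc δ₀/ε₁ * ‖e‖ < δ₀/ε₁ * ε₁ := by
            apply mul_lt_mul_of_pos_left hnorme (div_pos hδ₀ hε₁pos)
        _ = δ₀ := by field_simp
  · have hdy : d ⬝ᵥ y < r + ε/3 + ε₁ := by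
      have := hd2
      rw [dist_comm, Real.dist_eq] at this
      have := abs_lt.mp this
      linarith
    have hc₁Cd : c₁ * Cd ≤ ε/3 := by
      rw [hc₁]
      have h1 : ε₁ ≤ (ε/3) * δ₀ / (Cd + 1) := min_le_right _ _
      have h2 : ε₁ / δ₀ * Cd ≤ ((ε/3) * δ₀ / (Cd + 1)) / δ₀ * Cd := by
        gcongr
      have hδ₀ne : δ₀ ≠ 0 := hδ₀.ne'
      have hCdne : Cd + 1 ≠ 0 := by linarith
      calc ε₁ / δ₀ * Cd ≤ ((ε/3) * δ₀ / (Cd + 1)) / δ₀ * Cd := h2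
        _ = (ε/3) * (Cd / (Cd + 1)) := by field_simp
        _ ≤ (ε/3) * 1 := by
            apply mul_le_mul_of_nonneg_left _ (by linarith)
            rw [div_le_one (by linarith)]
            linarith
        _ = ε/3 := mul_one _
    have hε₁ε : ε₁ ≤ ε/3 := min_le_left _ _
    rw [dotProduct_add, dotProduct_smul, smul_eq_mul]
    have habs : c₁ * (d ⬝ᵥ yhat) ≤ c₁ * Cd := by
      apply mul_le_mul_of_nonneg_left (le_abs_self _) hc₁pos.le
    linarith

end Conic

lemma dot_mono {n : ℕ} {π u w : Fin n → ℝ} (hπ : ∀ i, 0 ≤ π i) (huw : u ≤ w) :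
    π ⬝ᵥ u ≤ π ⬝ᵥ w :=
  Finset.sum_le_sum fun i _ => mul_le_mul_of_nonneg_left (huw i) (hπ i)

lemma lp_forward {nz nh nm nμ : ℕ}
    (H : Matrix (Fin nh) (Fin nz) ℝ) (h : Fin nh → ℝ)
    (hZne : ∃ z : Fin nz → ℝ, H.mulVec z ≤ h)
    (M : Matrix (Fin nm) (Fin nz) ℝ) (N : Matrix (Fin nm) (Fin nμ) ℝ) (s t : Fin nm → ℝ)
    (V : Set ((Fin nz → ℝ) × ℝ))
    (hV0 : ((0 : Fin nz → ℝ), (0:ℝ)) ∈ V)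
    (hVfeas : ∀ le ∈ V, 0 ≤ le.2 ∧ ∃ μ : Fin nμ → ℝ,
        M.mulVec le.1 + N.mulVec μ + le.2 • s ≤ t)
    (p : (Fin nz → ℝ) → ℝ)
    (hple : ∀ z w, (∃ le ∈ V, w = le.1 ⬝ᵥ z - le.2) → w ≤ p z)
    (hpub : ∀ z b, (∀ w, (∃ le ∈ V, w = le.1 ⬝ᵥ z - le.2) → w ≤ b) → p z ≤ b)
    (k : ℝ) (hk : 0 ≤ k) (c : Fin nz → ℝ) (r : ℝ)
    (hrob : ∀ z : Fin nz → ℝ, H.mulVec z ≤ h → c ⬝ᵥ z ≤ r + k * p z) :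
    ∃ (β : Fin nh → ℝ) (μ : Fin nμ → ℝ) (η : ℝ), (0 ≤ β) ∧ 0 ≤ η ∧
      β ⬝ᵥ h + η ≤ r ∧
      M.mulVec (c - Hᵀ.mulVec β) + N.mulVec μ + η • s ≤ k • t := by
  classical
  by_contra hno
  -- set up the linear system whose feasibility is the goal
  set A : ((Unit ⊕ Fin nh) ⊕ (Unit ⊕ Fin nm)) → ((Fin nh ⊕ Fin nμ) ⊕ Unit) → ℝ := fun i =>
    Sum.elim
      (Sum.elim
        (fun _ => Sum.elim (Sum.elim (fun j => h j) (fun _ => 0)) (fun _ => 1))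
        (fun i' => Sum.elim (Sum.elim (fun j => if j = i' then (-1:ℝ) else 0) (fun _ => 0))
          (fun _ => 0)))
      (Sum.elim
        (fun _ => Sum.elim (fun _ => 0) (fun _ => (-1:ℝ)))
        (fun i' => Sum.elim (Sum.elim (fun j => -((M * Hᵀ) i' j)) (fun j => N i' j))
          (fun _ => s i'))) i with hA
  set b : ((Unit ⊕ Fin nh) ⊕ (Unit ⊕ Fin nm)) → ℝ := fun i =>
    Sum.elim (Sum.elim (fun _ => r) (fun _ => 0))
      (Sum.elim (fun _ => 0) (fun i' => k * t i' - (M.mulVec c) i')) i with hb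
  have hinfeas : ¬ ∃ w : ((Fin nh ⊕ Fin nμ) ⊕ Unit) → ℝ, ∀ i, A i ⬝ᵥ w ≤ b i := by
    rintro ⟨w, hw⟩
    apply hno
    set β : Fin nh → ℝ := fun j => w (Sum.inl (Sum.inl j)) with hβ
    set μv : Fin nμ → ℝ := fun j => w (Sum.inl (Sum.inr j)) with hμv
    set η : ℝ := w (Sum.inr ()) with hη
    have hdot : ∀ i : ((Unit ⊕ Fin nh) ⊕ (Unit ⊕ Fin nm)), A i ⬝ᵥ w =
        (∑ j, A i (Sum.inl (Sum.inl j)) * β j) + (∑ j, A i (Sum.inl (Sum.inr j)) * μv j)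
          + A i (Sum.inr ()) * η := by
      intro i
      simp [dotProduct, Fintype.sum_sum_type]
      rfl
    refine ⟨β, μv, η, ?_, ?_, ?_, ?_⟩
    · intro j
      have := hw (Sum.inl (Sum.inr j))
      rw [hdot] at this
      simp only [hA, Sum.elim_inl, Sum.elim_inr, hb] at this
      simpa [Finset.sum_ite_eq'] using this
    · have := hw (Sum.inr (Sum.inl ()))
      rw [hdot] at this
      simp only [hA, Sum.elim_inl, Sum.elim_inr, hb] at this
      simpa using this
    · have := hw (Sum.inl (Sum.inl ()))
      rw [hdot] at this
      simp only [hA, Sum.elim_inl, Sum.elim_inr, hb] at this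
      simp only [zero_mul, Finset.sum_const_zero, add_zero, one_mul] at this
      calc β ⬝ᵥ h + η = (∑ j, h j * β j) + η := by
            rw [dotProduct]; congr 1; apply Finset.sum_congr rfl; intro j _; ring
        _ ≤ r := this
    · intro i
      have := hw (Sum.inr (Sum.inr i))
      rw [hdot] at this
      simp only [hA, Sum.elim_inl, Sum.elim_inr, hb] at this
      have hMH : ∑ j, -((M * Hᵀ) i j) * β j = -((M.mulVec (Hᵀ.mulVec β)) i) := by
        rw [Matrix.mulVec_mulVec]
        simp only [Matrix.mulVec, dotProduct]
        rw [← Finset.sum_neg_distrib]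
        apply Finset.sum_congr rfl
        intro j _; ring
      rw [hMH] at this
      have hN : ∑ j, N i j * μv j = (N.mulVec μv) i := by
        simp [Matrix.mulVec, dotProduct]
      rw [hN] at this
      simp only [Pi.add_apply, Pi.smul_apply, smul_eq_mul, Pi.sub_apply]
      have hM : (M.mulVec (c - Hᵀ.mulVec β)) i
          = (M.mulVec c) i - (M.mulVec (Hᵀ.mulVec β)) i := by
        rw [Matrix.mulVec_sub]; rfl
      rw [hM]
      linarith
  obtain ⟨π, hπ0, hπcol, hπrhs⟩ := farkas_ineq A b hinfeas
  set γ : ℝ := π (Sum.inl (Sum.inl ())) with hγ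
  set a : Fin nh → ℝ := fun i => π (Sum.inl (Sum.inr i)) with ha
  set b₀ : ℝ := π (Sum.inr (Sum.inl ())) with hb₀
  set πm : Fin nm → ℝ := fun i => π (Sum.inr (Sum.inr i)) with hπm
  have hγ0 : 0 ≤ γ := hπ0 _
  have ha0 : ∀ i, 0 ≤ a i := fun i => hπ0 _
  have hb₀0 : 0 ≤ b₀ := hπ0 _
  have hπm0 : ∀ i, 0 ≤ πm i := fun i => hπ0 _
  set σ : Fin nz → ℝ := Mᵀ.mulVec πm with hσ
  have hcolsum : ∀ j : ((Fin nh ⊕ Fin nμ) ⊕ Unit), ∑ i, π i * A i j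
      = γ * A (Sum.inl (Sum.inl ())) j + (∑ i, a i * A (Sum.inl (Sum.inr i)) j)
        + b₀ * A (Sum.inr (Sum.inl ())) j + (∑ i, πm i * A (Sum.inr (Sum.inr i)) j) := by
    intro j
    rw [Fintype.sum_sum_type, Fintype.sum_sum_type, Fintype.sum_sum_type]
    simp only [Finset.univ_unique, Finset.sum_singleton]
    ring
  -- β-columns : (H *ᵥ σ) j = γ * h j - a j
  have hHσ : ∀ j, (H.mulVec σ) j = γ * h j - a j := by
    intro j
    have := hπcol (Sum.inl (Sum.inl j))
    rw [hcolsum] at this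
    simp only [hA, Sum.elim_inl, Sum.elim_inr] at this
    have h1 : ∑ i, a i * (if j = i then (-1:ℝ) else 0) = -a j := by
      simp [Finset.sum_ite_eq]
    rw [h1] at this
    have h2 : (H.mulVec σ) j = ∑ i, πm i * (M * Hᵀ) i j := by
      rw [hσ, Matrix.mulVec_mulVec]
      have htr : H * Mᵀ = (M * Hᵀ)ᵀ := by
        rw [Matrix.transpose_mul, Matrix.transpose_transpose]
      rw [htr]
      simp only [Matrix.mulVec, dotProduct, Matrix.transpose_apply]
      apply Finset.sum_congr rfl
      intro i _; ring
    have h3 : ∑ x, πm x * -((M * Hᵀ) x j) = -∑ x, πm x * ((M * Hᵀ) x j) := by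
      rw [← Finset.sum_neg_distrib]
      apply Finset.sum_congr rfl
      intro i _; ring
    rw [h3] at this
    rw [h2]
    linarith [this]
  -- μ-columns : (Nᵀ *ᵥ πm) j = 0
  have hNπ : ∀ j, (Nᵀ.mulVec πm) j = 0 := by
    intro j
    have := hπcol (Sum.inl (Sum.inr j))
    rw [hcolsum] at this
    simp only [hA, Sum.elim_inl, Sum.elim_inr] at this
    simp only [mul_zero, Finset.sum_const_zero, zero_add, add_zero] at this
    rw [Matrix.mulVec, dotProduct]
    simp only [Matrix.transpose_apply]
    calc ∑ i, Nᵀ j i * πm i = ∑ i, πm i * N i j := by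
          apply Finset.sum_congr rfl; intro i _; simp [Matrix.transpose_apply]; ring
      _ = 0 := this
  -- η-column : γ + πm ⬝ᵥ s = b₀
  have hηcol : γ + πm ⬝ᵥ s = b₀ := by
    have := hπcol (Sum.inr ())
    rw [hcolsum] at this
    simp only [hA, Sum.elim_inl, Sum.elim_inr] at this
    simp only [mul_one, mul_zero, Finset.sum_const_zero, add_zero, mul_neg_one] at this
    rw [dotProduct]
    linarith [this]
  -- objective row : γ * r + k * (πm ⬝ᵥ t) < σ ⬝ᵥ c
  have hobj : γ * r + k * (πm ⬝ᵥ t) < σ ⬝ᵥ c := by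
    have := hπrhs
    rw [Fintype.sum_sum_type, Fintype.sum_sum_type, Fintype.sum_sum_type] at this
    simp only [Finset.univ_unique, Finset.sum_singleton, hb, Sum.elim_inl, Sum.elim_inr,
      mul_zero, Finset.sum_const_zero, add_zero, zero_add] at this
    have hexp : ∑ i, πm i * (k * t i - (M.mulVec c) i)
        = k * (πm ⬝ᵥ t) - σ ⬝ᵥ c := by
      have hσc : σ ⬝ᵥ c = ∑ i, πm i * (M.mulVec c) i := by
        rw [hσ, Matrix.mulVec_transpose, ← Matrix.dotProduct_mulVec]
        rw [dotProduct]
      rw [hσc, dotProduct, Finset.mul_sum, ← Finset.sum_sub_distrib]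
      apply Finset.sum_congr rfl
      intro i _; ring
    rw [hexp] at this
    linarith
  -- key bound from dual feasibility of V
  have hkey : ∀ le ∈ V, le.1 ⬝ᵥ σ ≤ πm ⬝ᵥ t - le.2 * (πm ⬝ᵥ s) := by
    rintro ⟨lam, ηv⟩ hmem
    obtain ⟨hηv, μw, hμw⟩ := hVfeas _ hmem
    have hdot := dot_mono hπm0 hμw
    have h1 : πm ⬝ᵥ (M.mulVec lam) = lam ⬝ᵥ σ := by
      rw [hσ, Matrix.mulVec_transpose, Matrix.dotProduct_mulVec]
      exact dotProduct_comm _ _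
    have h2 : πm ⬝ᵥ (N.mulVec μw) = 0 := by
      rw [Matrix.dotProduct_mulVec, ← Matrix.mulVec_transpose]
      have : ∀ j, (Nᵀ.mulVec πm) j = 0 := hNπ
      have hz : Nᵀ.mulVec πm = 0 := funext this
      rw [hz, zero_dotProduct]
    have h3 : πm ⬝ᵥ (M.mulVec lam + N.mulVec μw + ηv • s)
        = lam ⬝ᵥ σ + ηv * (πm ⬝ᵥ s) := by
      rw [dotProduct_add, dotProduct_add, h1, h2, add_zero, dotProduct_smul, smul_eq_mul]
    rw [h3] at hdot
    linarith
  rcases lt_or_eq_of_le hγ0 with hγpos | hγzero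
  · -- γ > 0
    set z : Fin nz → ℝ := γ⁻¹ • σ with hz
    have hzZ : H.mulVec z ≤ h := by
      intro j
      rw [hz, Matrix.mulVec_smul]
      simp only [Pi.smul_apply, smul_eq_mul]
      rw [hHσ j]
      have heq : γ⁻¹ * (γ * h j - a j) = h j - γ⁻¹ * a j := by
        field_simp
      rw [heq]
      have h9 : 0 ≤ γ⁻¹ * a j := mul_nonneg (inv_nonneg.mpr hγ0) (ha0 j)
      linarith
    have hpz : p z ≤ γ⁻¹ * (πm ⬝ᵥ t) := by
      apply hpub
      rintro w ⟨⟨lam, ηv⟩, hmem, rfl⟩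
      obtain ⟨hηv, -⟩ := hVfeas _ hmem
      have hk1 := hkey _ hmem
      simp only at hk1 ⊢
      have hlz : lam ⬝ᵥ z = γ⁻¹ * (lam ⬝ᵥ σ) := by
        rw [hz]
        rw [dotProduct_smul, smul_eq_mul]
      rw [hlz]
      have h4 : γ⁻¹ * (lam ⬝ᵥ σ) ≤ γ⁻¹ * (πm ⬝ᵥ t - ηv * (πm ⬝ᵥ s)) :=
        mul_le_mul_of_nonneg_left hk1 (inv_nonneg.mpr hγ0)
      have h6 : 0 ≤ ηv * (γ⁻¹ * b₀) :=
        mul_nonneg hηv (mul_nonneg (inv_nonneg.mpr hγ0) hb₀0)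
      have h7 : γ⁻¹ * (πm ⬝ᵥ t - ηv * (πm ⬝ᵥ s))
          = γ⁻¹ * (πm ⬝ᵥ t) - ηv * (γ⁻¹ * (πm ⬝ᵥ s)) := by ring
      have h8 : ηv * (γ⁻¹ * (πm ⬝ᵥ s)) + ηv = ηv * (γ⁻¹ * b₀) := by
        have hbs : πm ⬝ᵥ s = b₀ - γ := by linarith [hηcol]
        rw [hbs]
        field_simp
        ring
      linarith
    have hcz : c ⬝ᵥ z = γ⁻¹ * (σ ⬝ᵥ c) := by
      rw [hz, dotProduct_smul, smul_eq_mul, dotProduct_comm]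
    have hmul := mul_lt_mul_of_pos_left hobj (inv_pos.mpr hγpos)
    have hexp2 : γ⁻¹ * (γ * r + k * (πm ⬝ᵥ t)) = r + k * (γ⁻¹ * (πm ⬝ᵥ t)) := by
      field_simp
    rw [hexp2] at hmul
    have hle := hrob z hzZ
    have hk2 : k * p z ≤ k * (γ⁻¹ * (πm ⬝ᵥ t)) := mul_le_mul_of_nonneg_left hpz hk
    rw [hcz] at hle
    linarith
  · -- γ = 0
    obtain ⟨z₀, hz₀⟩ := hZne
    have hHσ0 : ∀ j, (H.mulVec σ) j ≤ 0 := by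
      intro j
      rw [hHσ j, ← hγzero]
      have := ha0 j
      linarith
    have hπms : 0 ≤ πm ⬝ᵥ s := by
      have := hηcol
      rw [← hγzero] at this
      linarith
    have hD : 0 < σ ⬝ᵥ c - k * (πm ⬝ᵥ t) := by
      have := hobj
      rw [← hγzero] at this
      simp only [zero_mul, zero_add] at this
      linarith
    have key2 : ∀ n : ℕ, (n:ℝ) * (σ ⬝ᵥ c - k * (πm ⬝ᵥ t)) ≤ r + k * p z₀ - c ⬝ᵥ z₀ := by
      intro n
      set zn : Fin nz → ℝ := z₀ + (n:ℝ) • σ with hzn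
      have hznZ : H.mulVec zn ≤ h := by
        intro j
        rw [hzn, Matrix.mulVec_add, Matrix.mulVec_smul]
        simp only [Pi.add_apply, Pi.smul_apply, smul_eq_mul]
        have h1 := hHσ0 j
        have h2 := hz₀ j
        nlinarith [Nat.cast_nonneg (α := ℝ) n]
      have hpzn : p zn ≤ p z₀ + (n:ℝ) * (πm ⬝ᵥ t) := by
        apply hpub
        rintro w ⟨⟨lam, ηv⟩, hmem, rfl⟩
        obtain ⟨hηv, -⟩ := hVfeas _ hmem
        have hk1 := hkey _ hmem
        simp only at hk1 ⊢
        have hbase : lam ⬝ᵥ z₀ - ηv ≤ p z₀ := hple z₀ _ ⟨⟨lam, ηv⟩, hmem, rfl⟩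
        have hlz : lam ⬝ᵥ zn = lam ⬝ᵥ z₀ + (n:ℝ) * (lam ⬝ᵥ σ) := by
          rw [hzn, dotProduct_add, dotProduct_smul, smul_eq_mul]
        have hlamsig : lam ⬝ᵥ σ ≤ πm ⬝ᵥ t := by
          nlinarith [mul_nonneg hηv hπms]
        have hmono : (n:ℝ) * (lam ⬝ᵥ σ) ≤ (n:ℝ) * (πm ⬝ᵥ t) :=
          mul_le_mul_of_nonneg_left hlamsig (Nat.cast_nonneg n)
        linarith
      have hr := hrob zn hznZ
      have hczn : c ⬝ᵥ zn = c ⬝ᵥ z₀ + (n:ℝ) * (σ ⬝ᵥ c) := by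
        rw [hzn, dotProduct_add, dotProduct_smul, smul_eq_mul, dotProduct_comm σ c]
      have hkp : k * p zn ≤ k * (p z₀ + (n:ℝ) * (πm ⬝ᵥ t)) :=
        mul_le_mul_of_nonneg_left hpzn hk
      have hexp3 : k * (p z₀ + (n:ℝ) * (πm ⬝ᵥ t))
          = k * p z₀ + (n:ℝ) * (k * (πm ⬝ᵥ t)) := by ring
      rw [hczn] at hr
      nlinarith
    obtain ⟨n, hn⟩ := exists_nat_gt ((r + k * p z₀ - c ⬝ᵥ z₀) / (σ ⬝ᵥ c - k * (πm ⬝ᵥ t)))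
    have hkey2 := key2 n
    rw [div_lt_iff₀ hD] at hn
    nlinarith

/-- Recession direction of a bounded set containing `0` must vanish. -/
lemma recession_zero {nz nm nμ : ℕ}
    (M : Matrix (Fin nm) (Fin nz) ℝ) (N : Matrix (Fin nm) (Fin nμ) ℝ) (s t : Fin nm → ℝ)
    (V : Set ((Fin nz → ℝ) × ℝ))
    (hV : V = {le : (Fin nz → ℝ) × ℝ | 0 ≤ le.2 ∧
      ∃ μ : Fin nμ → ℝ, M.mulVec le.1 + N.mulVec μ + le.2 • s ≤ t})
    (hVbdd : Bornology.IsBounded V)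
    (hV0 : ((0 : Fin nz → ℝ), (0 : ℝ)) ∈ V)
    (lam : Fin nz → ℝ) (ηv : ℝ) (hηv : 0 ≤ ηv) (μv : Fin nμ → ℝ)
    (hle : M.mulVec lam + N.mulVec μv + ηv • s ≤ 0) : lam = 0 ∧ ηv = 0 := by
  have h0 := hV0
  rw [hV] at h0
  obtain ⟨hz2, μ₀, hμ₀⟩ := h0
  simp only [Matrix.mulVec_zero, zero_add, zero_smul, add_zero] at hμ₀
  have hmemV : ∀ n : ℕ, ((n : ℝ) • lam, (n : ℝ) * ηv) ∈ V := by
    intro n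
    rw [hV]
    refine ⟨mul_nonneg (Nat.cast_nonneg n) hηv, μ₀ + (n : ℝ) • μv, ?_⟩
    intro i
    have hcomp := hle i
    simp only [Pi.add_apply, Pi.smul_apply, smul_eq_mul, Pi.zero_apply] at hcomp
    have hμ₀i := hμ₀ i
    simp only [Matrix.mulVec_smul, Matrix.mulVec_add, Pi.add_apply, Pi.smul_apply,
      smul_eq_mul]
    have hn : (0:ℝ) ≤ (n:ℝ) := Nat.cast_nonneg n
    nlinarith [mul_nonneg hn (neg_nonneg.mpr hcomp)]
  obtain ⟨C, hC⟩ := Bornology.IsBounded.exists_norm_le hVbdd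
  constructor
  · by_contra hlam
    have hnorm : ‖lam‖ ≠ 0 := fun hz => hlam (norm_eq_zero.mp hz)
    have hpos : 0 < ‖lam‖ := lt_of_le_of_ne (norm_nonneg _) (Ne.symm hnorm)
    obtain ⟨n, hn⟩ := exists_nat_gt (C / ‖lam‖)
    have h1 := hC _ (hmemV n)
    rw [Prod.norm_def] at h1
    have h2 : (n : ℝ) * ‖lam‖ ≤ C := by
      have := le_trans (le_max_left _ _) h1
      rwa [norm_smul, Real.norm_natCast] at this
    rw [div_lt_iff₀ hpos] at hn
    linarith
  · by_contra hη
    have hpos : 0 < ηv := lt_of_le_of_ne hηv (Ne.symm hη)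
    obtain ⟨n, hn⟩ := exists_nat_gt (C / ηv)
    have h1 := hC _ (hmemV n)
    rw [Prod.norm_def] at h1
    have h2 : (n : ℝ) * ηv ≤ C := by
      have := le_trans (le_max_right _ _) h1
      rwa [Real.norm_eq_abs, abs_of_nonneg (mul_nonneg (Nat.cast_nonneg n) hηv)] at this
    rw [div_lt_iff₀ hpos] at hn
    linarith

/-- Upper bound for the penalty sup-set from boundedness of `V`. -/
lemma penalty_bddAbove {nz : ℕ} (V : Set ((Fin nz → ℝ) × ℝ))
    (hVbdd : Bornology.IsBounded V) (z : Fin nz → ℝ) :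
    BddAbove {w : ℝ | ∃ le ∈ V, w = le.1 ⬝ᵥ z - le.2} := by
  obtain ⟨C, hC⟩ := Bornology.IsBounded.exists_norm_le hVbdd
  refine ⟨(max C 0) * (∑ i, |z i|) + max C 0, ?_⟩
  rintro w ⟨⟨lam, ηv⟩, hmem, rfl⟩
  have hp := hC _ hmem
  rw [Prod.norm_def] at hp
  have hlamC : ‖lam‖ ≤ C := le_trans (le_max_left _ _) hp
  have hηvC : ‖ηv‖ ≤ C := le_trans (le_max_right _ _) hp
  have hlam : ∀ i, |lam i| ≤ max C 0 := by
    intro i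
    calc |lam i| = ‖lam i‖ := rfl
      _ ≤ ‖lam‖ := norm_le_pi_norm lam i
      _ ≤ C := hlamC
      _ ≤ max C 0 := le_max_left _ _
  have hηv : |ηv| ≤ max C 0 := le_trans hηvC (le_max_left _ _)
  simp only
  have h1 : lam ⬝ᵥ z ≤ (max C 0) * ∑ i, |z i| := by
    calc lam ⬝ᵥ z = ∑ i, lam i * z i := rfl
      _ ≤ ∑ i, |lam i * z i| := Finset.sum_le_sum fun i _ => le_abs_self _
      _ = ∑ i, |lam i| * |z i| := by
          apply Finset.sum_congr rfl; intro i _; rw [abs_mul]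
      _ ≤ ∑ i, (max C 0) * |z i| := by
          apply Finset.sum_le_sum
          intro i _
          exact mul_le_mul_of_nonneg_right (hlam i) (abs_nonneg _)
      _ = (max C 0) * ∑ i, |z i| := by rw [Finset.mul_sum]
  have h2 : -ηv ≤ max C 0 := by
    have := neg_abs_le ηv
    linarith [hηv]
  linarith

/-- **Theorem 2 (exact dual reformulation of the robust satisficing feasible set).**
Under complete and bounded recourse, polyhedral support and polyhedral penalty, the set
`Y = {(x,υ,k) ∈ X × ℝ × ℝ₊ : g(x,z) − k·p(z) ≤ υ ∀ z ∈ Z}` equals the set of all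
`(x,υ,k)` for which there exist (arbitrary) dual recourse functions `β, μ, η` satisfying,
for every `ρ` in the dual uncertainty set `P = {ρ ∈ K* : Bᵀρ = d}`:
`ρᵀf(x) + β(ρ)ᵀh + η(ρ) ≤ υ`, `M(F(x)ᵀρ − Hᵀβ(ρ)) + Nμ(ρ) + s·η(ρ) ≤ t·k`,
`β(ρ) ≥ 0`, `η(ρ) ≥ 0`. -/
theorem robust_satisficing_dual_reformulation {nx ny nz nf nh nm nμ : ℕ}
    (B : Matrix (Fin nf) (Fin ny) ℝ) (d : Fin ny → ℝ) (K : Set (Fin nf → ℝ))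
    -- `K` is a proper cone:
    (hKclosed : IsClosed K) (hKconv : Convex ℝ K)
    (hKcone : ∀ v ∈ K, ∀ c : ℝ, 0 ≤ c → c • v ∈ K)
    (hKpointed : K ∩ (-K) = {(0 : Fin nf → ℝ)})
    (hKsolid : (interior K).Nonempty)
    -- complete and bounded recourse:
    (hcomplete : ∀ v : Fin nf → ℝ, ∃ y : Fin ny → ℝ, B.mulVec y - v ∈ K)
    (hbounded : ¬ ∃ y : Fin ny → ℝ, B.mulVec y ∈ K ∧ d ⬝ᵥ y < 0)
    -- affine data of the conic evaluation function:
    (f : (Fin nx → ℝ) →ᵃ[ℝ] (Fin nf → ℝ))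
    (F : (Fin nx → ℝ) →ᵃ[ℝ] Matrix (Fin nf) (Fin nz) ℝ)
    (g : (Fin nx → ℝ) → (Fin nz → ℝ) → ℝ)
    (hg : ∀ x z, g x z = sInf {v : ℝ | ∃ y : Fin ny → ℝ,
        B.mulVec y - (f x + (F x).mulVec z) ∈ K ∧ v = d ⬝ᵥ y})
    -- polyhedral support:
    (H : Matrix (Fin nh) (Fin nz) ℝ) (h : Fin nh → ℝ) (hh : 0 ≤ h)
    (hZne : ∃ z : Fin nz → ℝ, H.mulVec z ≤ h)
    -- polyhedral penalty:
    (M : Matrix (Fin nm) (Fin nz) ℝ) (N : Matrix (Fin nm) (Fin nμ) ℝ)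
    (s t : Fin nm → ℝ)
    (V : Set ((Fin nz → ℝ) × ℝ))
    (hV : V = {le | 0 ≤ le.2 ∧
      ∃ μ : Fin nμ → ℝ, M.mulVec le.1 + N.mulVec μ + le.2 • s ≤ t})
    (hVbdd : Bornology.IsBounded V)
    (hV0 : ((0 : Fin nz → ℝ), (0 : ℝ)) ∈ V)
    (hslater : ∃ μhat : Fin nμ → ℝ, ∀ i, (N.mulVec μhat) i < t i)
    (p : (Fin nz → ℝ) → ℝ)
    (hp : ∀ ζ, p ζ = sSup {v : ℝ | ∃ le ∈ V, v = le.1 ⬝ᵥ ζ - le.2})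
    (X : Set (Fin nx → ℝ))
    -- dual uncertainty set:
    (P : Set (Fin nf → ℝ))
    (hP : P = {ρ | (∀ v ∈ K, 0 ≤ ρ ⬝ᵥ v) ∧ Bᵀ.mulVec ρ = d}) :
    {q : (Fin nx → ℝ) × ℝ × ℝ | q.1 ∈ X ∧ 0 ≤ q.2.2 ∧
        ∀ z : Fin nz → ℝ, H.mulVec z ≤ h → g q.1 z - q.2.2 * p z ≤ q.2.1}
    = {q : (Fin nx → ℝ) × ℝ × ℝ | q.1 ∈ X ∧ 0 ≤ q.2.2 ∧
        ∃ (β : (Fin nf → ℝ) → (Fin nh → ℝ)) (μ : (Fin nf → ℝ) → (Fin nμ → ℝ))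
          (η : (Fin nf → ℝ) → ℝ),
        ∀ ρ ∈ P,
          ρ ⬝ᵥ f q.1 + β ρ ⬝ᵥ h + η ρ ≤ q.2.1 ∧
          M.mulVec ((F q.1)ᵀ.mulVec ρ - Hᵀ.mulVec (β ρ)) + N.mulVec (μ ρ)
              + η ρ • s ≤ q.2.2 • t ∧
          0 ≤ β ρ ∧ 0 ≤ η ρ} := by
  classical
  have hKne : K.Nonempty := ⟨_, interior_subset hKsolid.choose_spec⟩
  have h0K : (0 : Fin nf → ℝ) ∈ K := cone_zero_mem K hKcone hKne
  have hbddA : ∀ z, BddAbove {w : ℝ | ∃ le ∈ V, w = le.1 ⬝ᵥ z - le.2} :=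
    penalty_bddAbove V hVbdd
  have hne0 : ∀ z : Fin nz → ℝ, (0:ℝ) ∈ {w : ℝ | ∃ le ∈ V, w = le.1 ⬝ᵥ z - le.2} :=
    fun z => ⟨(0, 0), hV0, by simp⟩
  have hple : ∀ (z : Fin nz → ℝ) w, (∃ le ∈ V, w = le.1 ⬝ᵥ z - le.2) → w ≤ p z := by
    intro z w hw
    rw [hp]
    exact le_csSup (hbddA z) hw
  have hpub : ∀ (z : Fin nz → ℝ) b, (∀ w, (∃ le ∈ V, w = le.1 ⬝ᵥ z - le.2) → w ≤ b) → p z ≤ b := by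
    intro z b hb
    rw [hp]
    exact csSup_le ⟨0, hne0 z⟩ hb
  have hVfeas : ∀ le ∈ V, 0 ≤ le.2 ∧ ∃ μ : Fin nμ → ℝ,
      M.mulVec le.1 + N.mulVec μ + le.2 • s ≤ t := by
    intro le hle
    rw [hV] at hle
    exact hle
  have hweak : ∀ (x : Fin nx → ℝ) (z : Fin nz → ℝ) (ρ : Fin nf → ℝ),
      (∀ w ∈ K, 0 ≤ ρ ⬝ᵥ w) → Bᵀ.mulVec ρ = d →
      ρ ⬝ᵥ (f x + (F x).mulVec z) ≤ g x z := by
    intro x z ρ hρK hρB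
    rw [hg]
    have hne : {v : ℝ | ∃ y : Fin ny → ℝ,
        B.mulVec y - (f x + (F x).mulVec z) ∈ K ∧ v = d ⬝ᵥ y}.Nonempty := by
      obtain ⟨y, hy⟩ := hcomplete (f x + (F x).mulVec z)
      exact ⟨d ⬝ᵥ y, y, hy, rfl⟩
    apply le_csInf hne
    rintro b ⟨y, hyK, rfl⟩
    have h1 : 0 ≤ ρ ⬝ᵥ (B.mulVec y - (f x + (F x).mulVec z)) := hρK _ hyK
    have h2 : ρ ⬝ᵥ B.mulVec y = d ⬝ᵥ y := by
      rw [dotProduct_mulVec, ← Matrix.mulVec_transpose, hρB]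
    rw [dotProduct_sub, h2] at h1
    linarith
  obtain ⟨ρstar, hρstarK, hρstarB⟩ :=
    P_nonempty B d K hKclosed hKconv hKcone hKne hcomplete hbounded
  apply Set.ext
  rintro ⟨x, υ, k⟩
  simp only [Set.mem_setOf_eq]
  constructor
  · rintro ⟨hxX, hk, hrob⟩
    refine ⟨hxX, hk, ?_⟩
    have hch : ∀ ρ : Fin nf → ℝ, ∃ (βρ : Fin nh → ℝ) (μρ : Fin nμ → ℝ) (ηρ : ℝ),
        ρ ∈ P → (ρ ⬝ᵥ f x + βρ ⬝ᵥ h + ηρ ≤ υ ∧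
          M.mulVec ((F x)ᵀ.mulVec ρ - Hᵀ.mulVec βρ) + N.mulVec μρ + ηρ • s ≤ k • t ∧
          (0 : Fin nh → ℝ) ≤ βρ ∧ 0 ≤ ηρ) := by
      intro ρ
      by_cases hρ : ρ ∈ P
      · have hρ' := hρ
        rw [hP] at hρ'
        obtain ⟨hρK, hρB⟩ := hρ'
        have hrob' : ∀ z : Fin nz → ℝ, H.mulVec z ≤ h →
            ((F x)ᵀ.mulVec ρ) ⬝ᵥ z ≤ (υ - ρ ⬝ᵥ f x) + k * p z := by
          intro z hz
          have h1 := hweak x z ρ hρK hρB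
          have h2 := hrob z hz
          have h3 : ρ ⬝ᵥ (f x + (F x).mulVec z)
              = ρ ⬝ᵥ f x + ((F x)ᵀ.mulVec ρ) ⬝ᵥ z := by
            rw [dotProduct_add]
            congr 1
            rw [dotProduct_mulVec, ← Matrix.mulVec_transpose]
          rw [h3] at h1
          linarith
        obtain ⟨βρ, μρ, ηρ, hβ0, hη0, hbud, hcon⟩ :=
          lp_forward H h hZne M N s t V hV0 hVfeas p hple hpub k hk
            ((F x)ᵀ.mulVec ρ) (υ - ρ ⬝ᵥ f x) hrob'
        exact ⟨βρ, μρ, ηρ, fun _ => ⟨by linarith, hcon, hβ0, hη0⟩⟩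
      · exact ⟨0, 0, 0, fun hmem => absurd hmem hρ⟩
    choose βf μf ηf hall using hch
    exact ⟨βf, μf, ηf, fun ρ hρ => hall ρ hρ⟩
  · rintro ⟨hxX, hk, βf, μf, ηf, hall⟩
    refine ⟨hxX, hk, ?_⟩
    intro z hzZ
    set vv : Fin nf → ℝ := f x + (F x).mulVec z with hvv
    have hdual : ∀ ρ : Fin nf → ℝ, (∀ w ∈ K, 0 ≤ ρ ⬝ᵥ w) → Bᵀ.mulVec ρ = d →
        ρ ⬝ᵥ vv ≤ (υ + k * p z) := by
      intro ρ hρK hρB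
      have hρP : ρ ∈ P := by rw [hP]; exact ⟨hρK, hρB⟩
      obtain ⟨c1, c2, hβ0, hη0⟩ := hall ρ hρP
      set lam : Fin nz → ℝ := (F x)ᵀ.mulVec ρ - Hᵀ.mulVec (βf ρ) with hlam
      have hHz : (Hᵀ.mulVec (βf ρ)) ⬝ᵥ z = (βf ρ) ⬝ᵥ (H.mulVec z) := by
        rw [Matrix.mulVec_transpose, ← Matrix.dotProduct_mulVec]
      have hsplit : ρ ⬝ᵥ vv = ρ ⬝ᵥ f x + lam ⬝ᵥ z + (βf ρ) ⬝ᵥ (H.mulVec z) := by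
        rw [hvv, dotProduct_add]
        have hFz : ρ ⬝ᵥ (F x).mulVec z = ((F x)ᵀ.mulVec ρ) ⬝ᵥ z := by
          rw [dotProduct_mulVec, ← Matrix.mulVec_transpose]
        have hlz : lam ⬝ᵥ z = ((F x)ᵀ.mulVec ρ) ⬝ᵥ z - (Hᵀ.mulVec (βf ρ)) ⬝ᵥ z := by
          rw [hlam, sub_dotProduct]
        rw [hFz, hlz, hHz]
        ring
      have hβH : (βf ρ) ⬝ᵥ (H.mulVec z) ≤ (βf ρ) ⬝ᵥ h :=
        dot_mono (fun i => hβ0 i) hzZ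
      rcases lt_or_eq_of_le hk with hkpos | hkzero
      · have hmemV' : ((k⁻¹ • lam, k⁻¹ * ηf ρ) : (Fin nz → ℝ) × ℝ) ∈ V := by
          rw [hV]
          refine ⟨mul_nonneg (inv_nonneg.mpr hk) hη0, k⁻¹ • μf ρ, ?_⟩
          intro i
          have hc2 := c2 i
          simp only [Pi.add_apply, Pi.smul_apply, smul_eq_mul] at hc2
          simp only [Matrix.mulVec_smul, Pi.add_apply, Pi.smul_apply, smul_eq_mul]
          have hmul := mul_le_mul_of_nonneg_left hc2 (inv_nonneg.mpr hk)
          have hexp : k⁻¹ * (k * t i) = t i := by field_simp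
          calc k⁻¹ * (M.mulVec lam) i + k⁻¹ * (N.mulVec (μf ρ)) i + k⁻¹ * ηf ρ * s i
              = k⁻¹ * ((M.mulVec lam) i + (N.mulVec (μf ρ)) i + ηf ρ * s i) := by ring
            _ ≤ k⁻¹ * (k * t i) := by
                apply mul_le_mul_of_nonneg_left _ (inv_nonneg.mpr hk)
                calc (M.mulVec lam) i + (N.mulVec (μf ρ)) i + ηf ρ * s i ≤ (k • t) i := hc2
                  _ = k * t i := rfl
            _ = t i := hexp
        have hlamz : lam ⬝ᵥ z - ηf ρ ≤ k * p z := by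
          have hmem2 := hple z _ ⟨_, hmemV', rfl⟩
          have hmul := mul_le_mul_of_nonneg_left hmem2 hk
          have hexp : k * ((k⁻¹ • lam) ⬝ᵥ z - k⁻¹ * ηf ρ) = lam ⬝ᵥ z - ηf ρ := by
            rw [smul_dotProduct, smul_eq_mul]
            field_simp
          rw [hexp] at hmul
          exact hmul
        linarith
      · have hc2' : M.mulVec lam + N.mulVec (μf ρ) + ηf ρ • s ≤ 0 := by
          rw [← hkzero] at c2
          simpa using c2
        obtain ⟨hlam0, hηf0⟩ :=
          recession_zero M N s t V hV hVbdd hV0 lam (ηf ρ) hη0 (μf ρ) hc2'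
        have hlz0 : lam ⬝ᵥ z = 0 := by rw [hlam0, zero_dotProduct]
        have hpz0 : 0 ≤ p z := hple z 0 (hne0 z)
        rw [← hkzero]
        simp only [zero_mul, add_zero]
        linarith
    have hgle : g x z ≤ υ + k * p z := by
      rw [hg]
      have hSbdd : BddBelow {v : ℝ | ∃ y : Fin ny → ℝ,
          B.mulVec y - (f x + (F x).mulVec z) ∈ K ∧ v = d ⬝ᵥ y} := by
        refine ⟨ρstar ⬝ᵥ vv, ?_⟩
        rintro b ⟨y, hyK, rfl⟩
        have h1 : 0 ≤ ρstar ⬝ᵥ (B.mulVec y - vv) := hρstarK _ hyK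
        have h2 : ρstar ⬝ᵥ B.mulVec y = d ⬝ᵥ y := by
          rw [dotProduct_mulVec, ← Matrix.mulVec_transpose, hρstarB]
        rw [dotProduct_sub, h2] at h1
        linarith
      apply le_of_forall_pos_le_add
      intro ε hε
      obtain ⟨y, hyK, hyle⟩ := conic_dual_bound B d K hKclosed hKconv hKcone hKsolid
        hcomplete vv (υ + k * p z) hdual ε hε
      have hmem : d ⬝ᵥ y ∈ {v : ℝ | ∃ y : Fin ny → ℝ,
          B.mulVec y - (f x + (F x).mulVec z) ∈ K ∧ v = d ⬝ᵥ y} := ⟨y, hyK, rfl⟩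
      exact le_trans (csInf_le hSbdd hmem) hyle
    linarith
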